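/- Let X be a countably tight Hausdorff semitopological semilattice and L ⊆ X a chain order-isomorphic to (ω₁, min). Then I_L = {x ∈ X : xL is countable} is a closed ideal of X. -/

import Mathlib

open Cardinal Set

/-- A space is countably tight if every point of the closure of a set lies in the closure of
a countable subset. -/
def CountablyTight (X : Type*) [TopologicalSpace X] : Prop :=
  ∀ (A : Set X) (x : X), x ∈ closure A → ∃ B ⊆ A, B.Countable ∧ x ∈ closure B

/-- `Iio o` is countable for `o < ω₁`. -/
lemma countable_Iio_of_lt_omega1 {o : Ordinal} (h : o < (Cardinal.aleph 1).ord) :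
    (Set.Iio o).Countable := by
  rw [Cardinal.countable_iff_lt_aleph_one, Ordinal.mk_Iio_ordinal, Cardinal.lift_lt_aleph_one]
  exact Cardinal.lt_ord.mp h

/-- `Iio ω₁` is not countable. -/
lemma not_countable_Iio_omega1 :
    ¬ (Set.Iio (Cardinal.aleph 1).ord).Countable := by
  intro h
  rw [Cardinal.countable_iff_lt_aleph_one, Ordinal.mk_Iio_ordinal, Cardinal.card_ord,
    Cardinal.lift_lt_aleph_one] at h
  exact lt_irrefl _ h

/-- In the subtype `Iio ω₁`, every `Iic` is countable. -/
lemma countable_Iic_omega1 (b : ↥(Set.Iio (Cardinal.aleph 1).ord)) :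
    (Set.Iic b).Countable := by
  have hlim : Order.IsSuccLimit ((Cardinal.aleph 1).ord) :=
    Cardinal.isSuccLimit_ord (le_of_lt Cardinal.aleph0_lt_aleph_one)
  have hsucc : Order.succ (b : Ordinal) < (Cardinal.aleph 1).ord := hlim.succ_lt b.2
  have h1 : Set.Iic b ⊆ Subtype.val ⁻¹' (Set.Iio (Order.succ (b : Ordinal))) := by
    intro c hc
    have hcb : (c : Ordinal) ≤ (b : Ordinal) := hc
    exact lt_of_le_of_lt hcb (Order.lt_succ _)
  exact (((countable_Iio_of_lt_omega1 hsucc)).preimage Subtype.val_injective).mono h1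

/-- A monotone function on `Iio ω₁` with countable range is eventually constant. -/
lemma eventually_const_of_countable_range {X : Type*} [PartialOrder X]
    (f : ↥(Set.Iio (Cardinal.aleph 1).ord) → X) (hmono : Monotone f)
    (hcnt : (Set.range f).Countable) :
    ∃ a, ∀ b, a ≤ b → f b = f a := by
  -- some fiber is uncountable
  have hfib : ∃ c, ¬ (f ⁻¹' {c}).Countable := by
    by_contra hcon
    push_neg at hcon
    have huniv : (Set.univ : Set ↥(Set.Iio (Cardinal.aleph 1).ord)).Countable := by
      have hcover : (Set.univ : Set ↥(Set.Iio (Cardinal.aleph 1).ord))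
          ⊆ ⋃ c ∈ Set.range f, f ⁻¹' {c} := by
        intro a _
        exact Set.mem_biUnion (Set.mem_range_self a) rfl
      exact (Set.Countable.biUnion hcnt fun c _ => hcon c).mono hcover
    have : (Set.Iio (Cardinal.aleph 1).ord).Countable := by
      rw [← Set.countable_coe_iff]
      rw [Set.countable_univ_iff] at huniv
      exact huniv
    exact not_countable_Iio_omega1 this
  obtain ⟨c, hc⟩ := hfib
  have hne : (f ⁻¹' {c}).Nonempty := by
    rcases Set.eq_empty_or_nonempty (f ⁻¹' {c}) with h | h
    · exact absurd (h ▸ Set.countable_empty) hc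
    · exact h
  obtain ⟨a, ha⟩ := hne
  refine ⟨a, fun b hab => ?_⟩
  -- find an element of the fiber above b
  have hnb : ¬ (f ⁻¹' {c} ⊆ Set.Iic b) := by
    intro hsub
    exact hc ((countable_Iic_omega1 b).mono hsub)
  rw [Set.not_subset] at hnb
  obtain ⟨g, hg, hgb⟩ := hnb
  have hbg : b ≤ g := le_of_not_ge hgb
  have h1 : f a ≤ f b := hmono hab
  have h2 : f b ≤ f g := hmono hbg
  have h3 : f g = f a := by
    have := Set.mem_preimage.mp hg
    have := Set.mem_preimage.mp ha
    simp_all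
  exact le_antisymm (h3 ▸ h2) h1

/-- A countable set of ordinals below `ω₁` is bounded below `ω₁`. -/
lemma exists_bound_of_countable {S : Set Ordinal} (hS : S.Countable)
    (hS' : S ⊆ Set.Iio (Cardinal.aleph 1).ord) :
    ∃ a, a ∈ Set.Iio (Cardinal.aleph 1).ord ∧ ∀ s ∈ S, s ≤ a := by
  have hlim : Order.IsSuccLimit ((Cardinal.aleph 1).ord) :=
    Cardinal.isSuccLimit_ord (le_of_lt Cardinal.aleph0_lt_aleph_one)
  have hU : (⋃ s ∈ S, Set.Iic s).Countable := by
    refine hS.biUnion (fun s hs => ?_)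
    have hsub : Set.Iic s ⊆ Set.Iio (Order.succ s) := by
      intro c hc
      exact Set.mem_Iio.mpr (lt_of_le_of_lt (Set.mem_Iic.mp hc) (Order.lt_succ s))
    exact (countable_Iio_of_lt_omega1 (hlim.succ_lt (hS' hs))).mono hsub
  have hns : ¬ (Set.Iio (Cardinal.aleph 1).ord ⊆ ⋃ s ∈ S, Set.Iic s) := by
    intro h
    exact not_countable_Iio_omega1 (hU.mono h)
  rw [Set.not_subset] at hns
  obtain ⟨a, ha, haU⟩ := hns
  refine ⟨a, ha, fun s hs => ?_⟩
  by_contra hle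
  exact haU (Set.mem_biUnion hs (le_of_not_ge hle))

/-- Let `X` be a countably tight Hausdorff semitopological semilattice and `L` a chain
order-isomorphic to `(ω₁, min)`.  Then `I_L = {x : xL is countable}` is a closed ideal. -/
theorem IL_closed_ideal {X : Type*} [SemilatticeInf X] [TopologicalSpace X] [T2Space X]
    (hcont : ∀ s : X, Continuous fun x => s ⊓ x)
    (htight : CountablyTight X)
    (L : Set X)
    (hiso : Nonempty ((Set.Iio (Cardinal.aleph 1).ord) ≃o L)) :
    IsClosed {x : X | ((fun l => x ⊓ l) '' L).Countable} ∧
    ({x : X | ((fun l => x ⊓ l) '' L).Countable}).Nonempty ∧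
    ∀ a : X, ∀ y ∈ {x : X | ((fun l => x ⊓ l) '' L).Countable},
      a ⊓ y ∈ {x : X | ((fun l => x ⊓ l) '' L).Countable} := by
  obtain ⟨e⟩ := hiso
  have ideal : ∀ a : X, ∀ y ∈ {x : X | ((fun l => x ⊓ l) '' L).Countable},
      a ⊓ y ∈ {x : X | ((fun l => x ⊓ l) '' L).Countable} := by
    intro a y hy
    have hsub : ((fun l => (a ⊓ y) ⊓ l) '' L) ⊆ (fun t => a ⊓ t) '' ((fun l => y ⊓ l) '' L) := by
      rintro _ ⟨l, hl, rfl⟩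
      exact ⟨y ⊓ l, ⟨l, hl, rfl⟩, (inf_assoc a y l).symm⟩
    exact ((Set.Countable.image hy _).mono hsub)
  refine ⟨?_, ?_, ideal⟩
  · -- closedness
    refine isClosed_of_closure_subset ?_
    intro x hx
    obtain ⟨B, hBS, hBc, hxB⟩ := htight _ x hx
    by_contra hT
    set y : ↥(Set.Iio (Cardinal.aleph 1).ord) → X := fun α => x ⊓ (e α : X) with hy
    have hysurj : (fun l => x ⊓ l) '' L = Set.range y := by
      ext t
      constructor
      · rintro ⟨l, hl, rfl⟩
        exact ⟨e.symm ⟨l, hl⟩, by simp [hy]⟩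
      · rintro ⟨α, rfl⟩
        exact ⟨e α, (e α).2, rfl⟩
    have hymono : Monotone y := fun α β h =>
      inf_le_inf_left x (Subtype.coe_le_coe.mpr (e.monotone h))
    -- stabilization of translations of elements of B
    have hstab : ∀ b ∈ B, ∃ a, ∀ β, a ≤ β → y β ⊓ b = y a ⊓ b := by
      intro b hb
      have hb' : ((fun l => b ⊓ l) '' L).Countable := hBS hb
      have hmono : Monotone (fun α => y α ⊓ b) := fun α β h => inf_le_inf_right b (hymono h)
      have hrng : (Set.range fun α => y α ⊓ b).Countable := by
        have hsub : (Set.range fun α => y α ⊓ b)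
            ⊆ (fun t => x ⊓ t) '' ((fun l => b ⊓ l) '' L) := by
          rintro _ ⟨α, rfl⟩
          refine ⟨b ⊓ (e α : X), ⟨e α, (e α).2, rfl⟩, ?_⟩
          show x ⊓ (b ⊓ (e α : X)) = y α ⊓ b
          rw [hy]
          rw [inf_comm b, ← inf_assoc]
        exact (hb'.image _).mono hsub
      exact eventually_const_of_countable_range _ hmono hrng
    have h0 : (0 : Ordinal) < (Cardinal.aleph 1).ord := by
      have h0' : (0 : Cardinal) < ℵ₁ := Cardinal.aleph0_pos.trans Cardinal.aleph0_lt_aleph_one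
      simpa [Cardinal.ord_zero] using Cardinal.ord_lt_ord.mpr h0'
    haveI : Nonempty ↥(Set.Iio (Cardinal.aleph 1).ord) := ⟨⟨0, h0⟩⟩
    choose! g hg using hstab
    -- a common stabilization bound
    have hSb : ((fun b => ((g b : ↥(Set.Iio (Cardinal.aleph 1).ord)) : Ordinal)) '' B).Countable :=
      hBc.image _
    obtain ⟨a, ha, hbound⟩ := exists_bound_of_countable hSb
      (by rintro _ ⟨b, hb, rfl⟩; exact (g b).2)
    set A : ↥(Set.Iio (Cardinal.aleph 1).ord) := ⟨a, ha⟩ with hA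
    have hgA : ∀ b ∈ B, g b ≤ A := by
      intro b hb
      exact hbound _ ⟨b, hb, rfl⟩
    have hg' : ∀ b ∈ B, ∀ β, A ≤ β → y β ⊓ b = y A ⊓ b := by
      intro b hb β hβ
      rw [hg b hb β ((hgA b hb).trans hβ), hg b hb A (hgA b hb)]
    set Z : Set X := (fun b => y A ⊓ b) '' B with hZ
    -- claim 1 : y β ∈ closure Z for β ≥ A
    have claim1 : ∀ β, A ≤ β → y β ∈ closure Z := by
      intro β hβ
      have h1 : y β ∈ closure ((fun t => y β ⊓ t) '' B) := by
        apply image_closure_subset_closure_image (hcont (y β))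
        refine ⟨x, hxB, ?_⟩
        show y β ⊓ x = y β
        rw [hy]
        rw [inf_right_comm, inf_idem]
      have h2 : (fun t => y β ⊓ t) '' B = Z := by
        exact Set.image_congr (fun b hb => hg' b hb β hβ)
      rwa [h2] at h1
    -- claim 2 : elements of Z are fixed by translation by y β, β ≥ A
    have claim2 : ∀ β, A ≤ β → ∀ z ∈ Z, y β ⊓ z = z := by
      intro β hβ z hz
      obtain ⟨b, _, rfl⟩ := hz
      have h1 : y β ⊓ y A = y A := inf_eq_right.mpr (hymono hβ)
      rw [← inf_assoc, h1]
    -- claim 3 : the whole closure of Z is fixed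
    have claim3 : ∀ β, A ≤ β → closure Z ⊆ {t : X | y β ⊓ t = t} := by
      intro β hβ
      exact closure_minimal (claim2 β hβ) (isClosed_eq (hcont (y β)) continuous_id)
    -- hence y is constant above A
    have hle : ∀ α β, A ≤ α → A ≤ β → y α ≤ y β := by
      intro α β hα hβ
      have := claim3 β hβ (claim1 α hα)
      exact inf_eq_right.mp this
    have heq : ∀ β, A ≤ β → y β = y A :=
      fun β hβ => le_antisymm (hle β A hβ le_rfl) (hle A β le_rfl hβ)
    -- so the range of y is countable : contradiction
    apply hT
    show ((fun l => x ⊓ l) '' L).Countable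
    rw [hysurj]
    have hsub : Set.range y ⊆ y '' (Set.Iic A) ∪ {y A} := by
      rintro _ ⟨α, rfl⟩
      rcases le_total α A with h | h
      · exact Or.inl ⟨α, h, rfl⟩
      · exact Or.inr (heq α h)
    exact (((countable_Iic_omega1 A).image y).union (Set.countable_singleton _)).mono hsub
  · -- nonemptiness
    have h0 : (0 : Ordinal) < (Cardinal.aleph 1).ord := by
      have : (0 : Cardinal) < ℵ₁ := Cardinal.aleph0_pos.trans Cardinal.aleph0_lt_aleph_one
      simpa [Cardinal.ord_zero] using Cardinal.ord_lt_ord.mpr this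
    set l₀ : ↥L := e ⟨0, h0⟩ with hl₀
    refine ⟨(l₀ : X), ?_⟩
    have hsub : (fun l => (l₀ : X) ⊓ l) '' L ⊆ {(l₀ : X)} := by
      rintro _ ⟨l, hl, rfl⟩
      have hle : l₀ ≤ ⟨l, hl⟩ := by
        have : (⟨0, h0⟩ : ↥(Set.Iio (Cardinal.aleph 1).ord)) ≤ e.symm ⟨l, hl⟩ :=
          Subtype.mk_le_mk.mpr (zero_le)
        simpa [hl₀] using e.monotone this
      have : (l₀ : X) ⊓ l = (l₀ : X) := inf_eq_left.mpr (Subtype.coe_le_coe.mpr hle)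
      simp [this]
    exact (Set.countable_singleton _).mono hsub
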